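/- With the setup above, the power sums satisfy P_{kq} = α^k for all 0 ≤ k < q. -/

import Mathlib

open Polynomial Finset

/-- With the roots `σ_i` of `p(t) = t^(q+1) + α^q t^q + α t + γ` in `F_{q^2}` (`q` a power of 2),
the power sums satisfy `P_{kq} = α^k` for `0 ≤ k < q`. -/
theorem stmt_8 {ℓ q : ℕ} (hq : q = 2 ^ ℓ) (hℓ : 1 ≤ ℓ) {F : Type*} [Field F] [Fintype F]
    (hF : Fintype.card F = q ^ 2) [CharP F 2] (α γ : F) (σ : Fin (q + 1) → F)
    (hinj : Function.Injective σ)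
    (hp : (X ^ (q + 1) + C (α ^ q) * X ^ q + C α * X + C γ : F[X]) = ∏ i, (X - C (σ i))) :
    ∀ k < q, ∑ i, σ i ^ (k * q) = α ^ k := by
  classical
  have hq2 : 2 ≤ q := by
    subst hq
    calc 2 = 2 ^ 1 := rfl
    _ ≤ 2 ^ ℓ := Nat.pow_le_pow_right (by norm_num) hℓ
  have hqF : (q : F) = 0 := by
    have h2 : (2:ℕ) ∣ q := hq ▸ dvd_pow_self 2 (by omega)
    exact (CharP.cast_eq_zero_iff F 2 q).mpr h2
  set E : ℕ → F := fun j => ∑ t ∈ Finset.powersetCard j Finset.univ, ∏ i ∈ t, σ i with hEdef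
  set P : ℕ → F := fun j => ∑ i, σ i ^ j with hPdef
  -- coefficients of the product are the elementary symmetric functions (char 2, no signs)
  have key : ∀ m ≤ q+1, (X ^ (q + 1) + C (α ^ q) * X ^ q + C α * X + C γ : F[X]).coeff m
      = E (q+1-m) := by
    intro m hm
    have h1 : (∏ i, (X - C (σ i)) : F[X]) = ((Finset.univ.val.map σ).map (fun t => X - C t)).prod := by
      rw [Multiset.map_map]; rfl
    have hc : Multiset.card (Finset.univ.val.map σ) = q+1 := by simp
    rw [hp, h1, Multiset.prod_X_sub_C_coeff _ (by simpa using hm), hc, Finset.esymm_map_val,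
      CharTwo.neg_eq, one_pow, one_mul]
  have hE1 : E 1 = α ^ q := by
    have h := key q (by omega)
    rw [show q + 1 - q = 1 by omega] at h
    rw [← h]
    simp only [coeff_add, coeff_C_mul, coeff_X_pow, coeff_C, coeff_X]
    have h1 : ¬ (q = q + 1) := by omega
    have h2 : ¬ (q = 1) := by omega
    have h3 : ¬ (q = 0) := by omega
    have h4 : ¬ (1 = q) := by omega
    simp [h1, h2, h3, h4]
  have hE0 : ∀ j, 2 ≤ j → j ≤ q - 1 → E j = 0 := by
    intro j hj2 hjq
    have h := key (q+1-j) (by omega)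
    rw [show q + 1 - (q+1-j) = j by omega] at h
    rw [← h]
    simp only [coeff_add, coeff_C_mul, coeff_X_pow, coeff_C, coeff_X]
    have h1 : ¬ (q + 1 - j = q + 1) := by omega
    have h2 : ¬ (q + 1 - j = q) := by omega
    have h3 : ¬ (q + 1 - j = 1) := by omega
    have h4 : ¬ (q + 1 - j = 0) := by omega
    have h5 : ¬ (1 = q + 1 - j) := by omega
    simp [h1, h2, h3, h4, h5]
  -- Newton's identities, evaluated at σ
  have newton : ∀ k, 0 < k → P k = (-1:F)^(k+1) * k * E k
      - ∑ a ∈ (Finset.HasAntidiagonal.antidiagonal k).filter (fun a => a.1 ∈ Set.Ioo 0 k),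
          (-1:F)^a.1 * E a.1 * P a.2 := by
    intro k hk
    have h := congrArg (MvPolynomial.eval σ) (MvPolynomial.psum_eq_mul_esymm_sub_sum (Fin (q+1)) F k hk)
    simpa [MvPolynomial.psum, MvPolynomial.esymm, MvPolynomial.eval_prod, hEdef, hPdef] using h
  -- P k = α^{qk} for k ≤ q-1
  have hP : ∀ k, k ≤ q - 1 → P k = α ^ (q * k) := by
    intro k
    induction k using Nat.strong_induction_on with
    | _ k ih =>
      intro hk
      match k with
      | 0 =>
        simp only [hPdef, pow_zero, Nat.mul_zero]
        rw [Finset.sum_const, Finset.card_univ, Fintype.card_fin, nsmul_eq_mul, mul_one]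
        push_cast
        rw [hqF]; ring
      | 1 =>
        rw [newton 1 one_pos]
        have hfilter : (Finset.HasAntidiagonal.antidiagonal 1).filter (fun a => a.1 ∈ Set.Ioo 0 1) = ∅ := by
          ext a
          simp only [Finset.mem_filter, Finset.HasAntidiagonal.mem_antidiagonal, Set.mem_Ioo,
            Finset.notMem_empty, iff_false]
          omega
        rw [hfilter]
        simp [hE1, CharTwo.neg_eq]
      | (k+2) =>
        have hk1 : k + 2 ≤ q - 1 := hk
        rw [newton (k+2) (by omega)]
        rw [hE0 (k+2) (by omega) hk1, mul_zero, zero_sub]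
        have hsingle : ∑ a ∈ (Finset.HasAntidiagonal.antidiagonal (k+2)).filter (fun a => a.1 ∈ Set.Ioo 0 (k+2)),
            (-1:F)^a.1 * E a.1 * P a.2 = (-1:F)^1 * E 1 * P (k+1) := by
          apply Finset.sum_eq_single_of_mem (1, k+1)
          · simp only [Finset.mem_filter, Finset.HasAntidiagonal.mem_antidiagonal, Set.mem_Ioo]
            omega
          · intro a ha hne
            simp only [Finset.mem_filter, Finset.HasAntidiagonal.mem_antidiagonal, Set.mem_Ioo] at ha
            have ha1 : 2 ≤ a.1 := by
              rcases Nat.lt_or_ge a.1 2 with h | h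
              · exfalso
                interval_cases h1 : a.1
                · omega
                · apply hne
                  have : a.2 = k + 1 := by omega
                  exact Prod.ext h1 this
              · exact h
            rw [hE0 a.1 ha1 (by omega), mul_zero, zero_mul]
        rw [hsingle, hE1, ih (k+1) (by omega) (by omega)]
        rw [pow_one, mul_assoc, ← pow_add, show q + q * (k+1) = q * (k+2) by ring]
        simp
  -- conclude via Frobenius
  intro k hk
  have hfrob : ∑ i, σ i ^ (k * q) = (∑ i, σ i ^ k) ^ q := by
    subst hq
    rw [sum_pow_char_pow]
    congr 1
    ext i
    rw [← pow_mul, mul_comm]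
  have hPk : (∑ i, σ i ^ k) = α ^ (q * k) := hP k (by omega)
  rw [hfrob, hPk, ← pow_mul]
  have hcard : α ^ (q^2) = α := by rw [← hF]; exact FiniteField.pow_card α
  calc α ^ (q * k * q) = (α ^ (q^2)) ^ k := by rw [← pow_mul]; ring_nf
  _ = α ^ k := by rw [hcard]
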